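/- For every ω > 0 and x ∈ ℝ one has the generalized-kernel identities (H_ω(∂_ωΦ_ω))(x) = -σ₃Φ_ω(x) and (H_ω(x ↦ x·σ₃Φ_ω(x)))(x) = -2·Φ_ω'(x), where ∂_ωΦ_ω denotes the derivative of ω ↦ Φ_ω(x) in ω; consequently each of the four functions σ₃Φ_ω, Φ_ω', ∂_ωΦ_ω and x·σ₃Φ_ω(x) is annihilated pointwise by H_ω∘H_ω. -/

import Mathlib

noncomputable section

open Real MeasureTheory Matrix

/-- `sech y = 1 / cosh y`. -/
def sech (y : ℝ) : ℝ := 1 / Real.cosh y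

/-- The ground state profile `φ_ω(x) = (ω(p+1)/2)^{1/(p-1)} (sech(((p-1)/2)√ω x))^{2/(p-1)}`. -/
def phi (p ω x : ℝ) : ℝ :=
  (ω * (p + 1) / 2) ^ (1 / (p - 1)) * sech ((p - 1) / 2 * Real.sqrt ω * x) ^ (2 / (p - 1))

/-- The Pauli matrix `σ₁`. -/
def σ1 : Matrix (Fin 2) (Fin 2) ℂ := !![0, 1; 1, 0]

/-- The Pauli matrix `σ₂`. -/
def σ2 : Matrix (Fin 2) (Fin 2) ℂ := !![0, Complex.I; -Complex.I, 0]

/-- The Pauli matrix `σ₃`. -/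
def σ3 : Matrix (Fin 2) (Fin 2) ℂ := !![1, 0; 0, -1]

/-- The linearized operator
`(H_ω ξ)(x) = σ₃(-ξ'' + ωξ) - (1/2)φ_ω^{p-1}((p+1)σ₃ - (p-1)(iσ₂))ξ`. -/
def Hop (p ω : ℝ) (ξ : ℝ → Fin 2 → ℂ) (x : ℝ) : Fin 2 → ℂ :=
  σ3.mulVec (-(deriv (deriv ξ) x) + (ω : ℂ) • ξ x)
    - (((1 / 2) * phi p ω x ^ (p - 1) : ℝ) : ℂ) •
      (((p + 1 : ℂ) • σ3 - (p - 1 : ℂ) • (Complex.I • σ2)).mulVec (ξ x))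

/-- The vector ground state `Φ_ω(x) = (φ_ω(x), φ_ω(x))`. -/
def PhiVec (p ω : ℝ) (x : ℝ) : Fin 2 → ℂ := ![(phi p ω x : ℂ), (phi p ω x : ℂ)]

namespace GK

lemma sech_pos (y : ℝ) : 0 < sech y := div_pos one_pos (Real.cosh_pos y)

lemma sech_ne (y : ℝ) : sech y ≠ 0 := (sech_pos y).ne'

lemma hasDerivAt_sech (y : ℝ) : HasDerivAt sech (-(Real.tanh y * sech y)) y := by
  have h := (Real.hasDerivAt_cosh y).inv (Real.cosh_pos y).ne'
  have hs : sech = fun z => (Real.cosh z)⁻¹ := by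
    funext z; simp [sech, one_div]
  have e : -(Real.tanh y * sech y) = -Real.sinh y / Real.cosh y ^ 2 := by
    unfold sech
    rw [Real.tanh_eq_sinh_div_cosh, div_mul_div_comm, mul_one, neg_div, pow_two]
  rw [e, hs]
  exact h

lemma hasDerivAt_tanh (y : ℝ) : HasDerivAt Real.tanh (sech y ^ 2) y := by
  have h := (Real.hasDerivAt_sinh y).div (Real.hasDerivAt_cosh y) (Real.cosh_pos y).ne'
  have ht : Real.tanh = fun z => Real.sinh z / Real.cosh z := by
    funext z; exact Real.tanh_eq_sinh_div_cosh z
  have h1 : Real.cosh y ^ 2 - Real.sinh y ^ 2 = 1 := Real.cosh_sq_sub_sinh_sq y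
  have h2 : Real.cosh y ≠ 0 := (Real.cosh_pos y).ne'
  have e : sech y ^ 2 = (Real.cosh y * Real.cosh y - Real.sinh y * Real.sinh y) /
      Real.cosh y ^ 2 := by
    unfold sech
    field_simp
    nlinarith [h1]
  rw [ht, e]
  exact h

lemma tanh_sq (y : ℝ) : Real.tanh y ^ 2 = 1 - sech y ^ 2 := by
  have h1 : Real.cosh y ^ 2 - Real.sinh y ^ 2 = 1 := Real.cosh_sq_sub_sinh_sq y
  have h2 : Real.cosh y ≠ 0 := (Real.cosh_pos y).ne'
  rw [Real.tanh_eq_sinh_div_cosh]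
  unfold sech
  field_simp
  nlinarith [h1]

variable {p ω : ℝ}

def phid (p ω x : ℝ) : ℝ :=
  -(Real.sqrt ω * Real.tanh ((p - 1) / 2 * Real.sqrt ω * x) * phi p ω x)

def phi2 (p ω x : ℝ) : ℝ := ω * phi p ω x - phi p ω x ^ (p - 1) * phi p ω x

def phi3 (p ω x : ℝ) : ℝ := (ω - p * phi p ω x ^ (p - 1)) * phid p ω x

def dphi (p ω x : ℝ) : ℝ := phi p ω x / ((p - 1) * ω) + x * phid p ω x / (2 * ω)

def dphi1 (p ω x : ℝ) : ℝ :=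
  phid p ω x / ((p - 1) * ω) + (phid p ω x + x * phi2 p ω x) / (2 * ω)

def dphi2 (p ω x : ℝ) : ℝ :=
  phi2 p ω x / ((p - 1) * ω) + (2 * phi2 p ω x + x * phi3 p ω x) / (2 * ω)

lemma phi_pos (hp : 5 < p) (hω : 0 < ω) (x : ℝ) : 0 < phi p ω x :=
  mul_pos (Real.rpow_pos_of_pos (by nlinarith) _)
    (Real.rpow_pos_of_pos (sech_pos _) _)

lemma hasDerivAt_phi (hp : 5 < p) (hω : 0 < ω) (x : ℝ) :
    HasDerivAt (phi p ω) (phid p ω x) x := by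
  have hp1 : p - 1 ≠ 0 := by nlinarith
  have hc : HasDerivAt (fun x : ℝ => (p - 1) / 2 * Real.sqrt ω * x)
      ((p - 1) / 2 * Real.sqrt ω) x := by
    simpa using (hasDerivAt_id x).const_mul ((p - 1) / 2 * Real.sqrt ω)
  have hs : HasDerivAt (fun x : ℝ => sech ((p - 1) / 2 * Real.sqrt ω * x))
      (-(Real.tanh ((p - 1) / 2 * Real.sqrt ω * x) * sech ((p - 1) / 2 * Real.sqrt ω * x)) *
        ((p - 1) / 2 * Real.sqrt ω)) x :=
    (hasDerivAt_sech ((p - 1) / 2 * Real.sqrt ω * x)).comp x hc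
  have hq : HasDerivAt
      (fun x : ℝ => sech ((p - 1) / 2 * Real.sqrt ω * x) ^ (2 / (p - 1)))
      (-(Real.tanh ((p - 1) / 2 * Real.sqrt ω * x) * sech ((p - 1) / 2 * Real.sqrt ω * x)) *
        ((p - 1) / 2 * Real.sqrt ω) * (2 / (p - 1)) *
        sech ((p - 1) / 2 * Real.sqrt ω * x) ^ (2 / (p - 1) - 1)) x :=
    hs.rpow_const (Or.inl (sech_ne _))
  have hq2 := hq.const_mul ((ω * (p + 1) / 2) ^ (1 / (p - 1)))
  have hfun : phi p ω = fun x => (ω * (p + 1) / 2) ^ (1 / (p - 1)) *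
      sech ((p - 1) / 2 * Real.sqrt ω * x) ^ (2 / (p - 1)) := rfl
  rw [hfun]
  refine hq2.congr_deriv ?_
  symm
  have hss : sech ((p - 1) / 2 * Real.sqrt ω * x) ≠ 0 := sech_ne _
  rw [Real.rpow_sub_one hss]
  have e2 : -(Real.tanh ((p - 1) / 2 * Real.sqrt ω * x) * sech ((p - 1) / 2 * Real.sqrt ω * x)) *
      ((p - 1) / 2 * Real.sqrt ω) * (2 / (p - 1)) =
      -(Real.sqrt ω * Real.tanh ((p - 1) / 2 * Real.sqrt ω * x) *
        sech ((p - 1) / 2 * Real.sqrt ω * x)) := by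
    field_simp
  have e3 : -(Real.sqrt ω * Real.tanh ((p - 1) / 2 * Real.sqrt ω * x) *
      sech ((p - 1) / 2 * Real.sqrt ω * x)) *
      (sech ((p - 1) / 2 * Real.sqrt ω * x) ^ (2 / (p - 1)) /
        sech ((p - 1) / 2 * Real.sqrt ω * x)) =
      -(Real.sqrt ω * Real.tanh ((p - 1) / 2 * Real.sqrt ω * x) *
        sech ((p - 1) / 2 * Real.sqrt ω * x) ^ (2 / (p - 1))) := by
    rw [show -(Real.sqrt ω * Real.tanh ((p - 1) / 2 * Real.sqrt ω * x) *
        sech ((p - 1) / 2 * Real.sqrt ω * x)) *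
        (sech ((p - 1) / 2 * Real.sqrt ω * x) ^ (2 / (p - 1)) /
          sech ((p - 1) / 2 * Real.sqrt ω * x)) =
        -(Real.sqrt ω * Real.tanh ((p - 1) / 2 * Real.sqrt ω * x) *
          sech ((p - 1) / 2 * Real.sqrt ω * x) ^ (2 / (p - 1)) *
          (sech ((p - 1) / 2 * Real.sqrt ω * x) / sech ((p - 1) / 2 * Real.sqrt ω * x))) from by
      ring]
    rw [div_self hss, mul_one]
  rw [e2, e3]
  unfold phid phi
  ring

lemma phi_rpow_sub_one (hp : 5 < p) (hω : 0 < ω) (x : ℝ) :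
    phi p ω x ^ (p - 1) =
      ω * (p + 1) / 2 * sech ((p - 1) / 2 * Real.sqrt ω * x) ^ (2 : ℕ) := by
  have hp1 : p - 1 ≠ 0 := by nlinarith
  have hA : (0:ℝ) ≤ ω * (p + 1) / 2 := by nlinarith
  have hs := (sech_pos ((p - 1) / 2 * Real.sqrt ω * x)).le
  unfold phi
  rw [Real.mul_rpow (Real.rpow_nonneg hA _) (Real.rpow_nonneg hs _),
    ← Real.rpow_mul hA, ← Real.rpow_mul hs]
  have e1 : 1 / (p - 1) * (p - 1) = 1 := by field_simp
  have e2 : 2 / (p - 1) * (p - 1) = ((2 : ℕ) : ℝ) := by field_simp; norm_num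
  rw [e1, e2, Real.rpow_one, Real.rpow_natCast]

lemma phi_rpow (hp : 5 < p) (hω : 0 < ω) (x : ℝ) :
    phi p ω x ^ p = phi p ω x ^ (p - 1) * phi p ω x := by
  have h := Real.rpow_add_one (phi_pos hp hω x).ne' (p - 1)
  rw [show p - 1 + 1 = p by ring] at h
  exact h

lemma hasDerivAt_phid (hp : 5 < p) (hω : 0 < ω) (x : ℝ) :
    HasDerivAt (phid p ω) (phi2 p ω x) x := by
  have hc : HasDerivAt (fun x : ℝ => (p - 1) / 2 * Real.sqrt ω * x)
      ((p - 1) / 2 * Real.sqrt ω) x := by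
    simpa using (hasDerivAt_id x).const_mul ((p - 1) / 2 * Real.sqrt ω)
  have ht : HasDerivAt (fun x : ℝ => Real.tanh ((p - 1) / 2 * Real.sqrt ω * x))
      (sech ((p - 1) / 2 * Real.sqrt ω * x) ^ 2 * ((p - 1) / 2 * Real.sqrt ω)) x :=
    (hasDerivAt_tanh ((p - 1) / 2 * Real.sqrt ω * x)).comp x hc
  have h := (((ht.const_mul (Real.sqrt ω)).mul (hasDerivAt_phi hp hω x)).neg)
  have hfun : phid p ω = fun x => -(Real.sqrt ω *
      Real.tanh ((p - 1) / 2 * Real.sqrt ω * x) * phi p ω x) := rfl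
  rw [hfun]
  refine h.congr_deriv ?_
  symm
  unfold phi2
  rw [phi_rpow_sub_one hp hω x]
  have h1 : Real.sqrt ω * Real.sqrt ω = ω := Real.mul_self_sqrt hω.le
  have h2 : Real.tanh ((p - 1) / 2 * Real.sqrt ω * x) ^ 2 =
      1 - sech ((p - 1) / 2 * Real.sqrt ω * x) ^ 2 := tanh_sq _
  unfold phid
  linear_combination (phi p ω x * ((p - 1) / 2 * sech ((p - 1) / 2 * Real.sqrt ω * x) ^ 2 -
    Real.tanh ((p - 1) / 2 * Real.sqrt ω * x) ^ 2)) * h1 - ω * phi p ω x * h2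

lemma hasDerivAt_phi2 (hp : 5 < p) (hω : 0 < ω) (x : ℝ) :
    HasDerivAt (phi2 p ω) (phi3 p ω x) x := by
  have hfun : phi2 p ω = fun x => ω * phi p ω x - phi p ω x ^ p := by
    funext y
    rw [phi2, phi_rpow hp hω y]
  rw [hfun]
  have h1 := (hasDerivAt_phi hp hω x).const_mul ω
  have h2 := (hasDerivAt_phi hp hω x).rpow_const (p := p) (Or.inl (phi_pos hp hω x).ne')
  have h := h1.sub h2
  refine h.congr_deriv ?_
  symm
  unfold phi3
  ring

lemma hasDerivAt_phiomega (hp : 5 < p) (hω : 0 < ω) (x : ℝ) :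
    HasDerivAt (fun w => phi p w x) (dphi p ω x) ω := by
  have hp1 : p - 1 ≠ 0 := by nlinarith
  have hA : (0:ℝ) < ω * (p + 1) / 2 := by nlinarith
  have hsq : Real.sqrt ω ≠ 0 := by
    simpa [Real.sqrt_eq_zero'] using by nlinarith
  have hss : sech ((p - 1) / 2 * Real.sqrt ω * x) ≠ 0 := sech_ne _
  have h1 : HasDerivAt (fun w : ℝ => w * (p + 1) / 2) ((p + 1) / 2) ω := by
    simpa using ((hasDerivAt_id ω).mul_const (p + 1)).div_const 2
  have h2 : HasDerivAt (fun w : ℝ => (w * (p + 1) / 2) ^ (1 / (p - 1)))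
      ((ω * (p + 1) / 2) ^ (1 / (p - 1)) / ((p - 1) * ω)) ω := by
    have h2a : HasDerivAt (fun w : ℝ => (w * (p + 1) / 2) ^ (1 / (p - 1)))
        ((p + 1) / 2 * (1 / (p - 1)) * (ω * (p + 1) / 2) ^ (1 / (p - 1) - 1)) ω :=
      h1.rpow_const (Or.inl hA.ne')
    convert h2a using 1
    rw [Real.rpow_sub_one hA.ne']
    have hpp : p + 1 ≠ 0 := by nlinarith
    field_simp
    try ring
  have h3 : HasDerivAt (fun w : ℝ => (p - 1) / 2 * Real.sqrt w * x)
      ((p - 1) / 2 * (1 / (2 * Real.sqrt ω)) * x) ω := by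
    have := ((Real.hasDerivAt_sqrt hω.ne').const_mul ((p - 1) / 2)).mul_const x
    convert this using 1
    try ring
  have h4 : HasDerivAt (fun w : ℝ => sech ((p - 1) / 2 * Real.sqrt w * x))
      (-(Real.tanh ((p - 1) / 2 * Real.sqrt ω * x) * sech ((p - 1) / 2 * Real.sqrt ω * x)) *
        ((p - 1) / 2 * (1 / (2 * Real.sqrt ω)) * x)) ω :=
    (hasDerivAt_sech _).comp ω h3
  have h5 : HasDerivAt (fun w : ℝ => sech ((p - 1) / 2 * Real.sqrt w * x) ^ (2 / (p - 1)))
      (-(x / (2 * Real.sqrt ω) * Real.tanh ((p - 1) / 2 * Real.sqrt ω * x) *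
        sech ((p - 1) / 2 * Real.sqrt ω * x) ^ (2 / (p - 1)))) ω := by
    have h5a : HasDerivAt
        (fun w : ℝ => sech ((p - 1) / 2 * Real.sqrt w * x) ^ (2 / (p - 1)))
        (-(Real.tanh ((p - 1) / 2 * Real.sqrt ω * x) * sech ((p - 1) / 2 * Real.sqrt ω * x)) *
          ((p - 1) / 2 * (1 / (2 * Real.sqrt ω)) * x) * (2 / (p - 1)) *
          sech ((p - 1) / 2 * Real.sqrt ω * x) ^ (2 / (p - 1) - 1)) ω :=
      h4.rpow_const (Or.inl hss)
    convert h5a using 1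
    rw [Real.rpow_sub_one hss]
    rw [show -(Real.tanh ((p - 1) / 2 * Real.sqrt ω * x) * sech ((p - 1) / 2 * Real.sqrt ω * x)) *
        ((p - 1) / 2 * (1 / (2 * Real.sqrt ω)) * x) * (2 / (p - 1)) *
        (sech ((p - 1) / 2 * Real.sqrt ω * x) ^ (2 / (p - 1)) /
          sech ((p - 1) / 2 * Real.sqrt ω * x)) =
        -(x / (2 * Real.sqrt ω) * Real.tanh ((p - 1) / 2 * Real.sqrt ω * x) *
          sech ((p - 1) / 2 * Real.sqrt ω * x) ^ (2 / (p - 1))) *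
        ((p - 1) * (1 / (p - 1))) *
        (sech ((p - 1) / 2 * Real.sqrt ω * x) * (1 / sech ((p - 1) / 2 * Real.sqrt ω * x)))
        from by ring]
    rw [mul_one_div_cancel hp1, mul_one_div_cancel hss, mul_one, mul_one]
  have h := h2.mul h5
  have hfun : (fun w => phi p w x) = fun w => (w * (p + 1) / 2) ^ (1 / (p - 1)) *
      sech ((p - 1) / 2 * Real.sqrt w * x) ^ (2 / (p - 1)) := rfl
  rw [hfun]
  refine h.congr_deriv ?_
  symm
  unfold dphi phid phi
  clear h h1 h2 h3 h4 h5 hfun hA hss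
  obtain ⟨r, hr0, hrr⟩ : ∃ r : ℝ, 0 < r ∧ r * r = ω :=
    ⟨Real.sqrt ω, Real.sqrt_pos.2 hω, Real.mul_self_sqrt hω.le⟩
  subst hrr
  rw [Real.sqrt_mul_self hr0.le]
  field_simp

lemma hasDerivAt_dphi (hp : 5 < p) (hω : 0 < ω) (x : ℝ) :
    HasDerivAt (dphi p ω) (dphi1 p ω x) x := by
  have h1 := (hasDerivAt_phi hp hω x).div_const ((p - 1) * ω)
  have h2 := (((hasDerivAt_id x).mul (hasDerivAt_phid hp hω x))).div_const (2 * ω)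
  have h := h1.add h2
  have hfun : dphi p ω = fun x => phi p ω x / ((p - 1) * ω) + x * phid p ω x / (2 * ω) := rfl
  rw [hfun]
  refine h.congr_deriv ?_
  symm
  unfold dphi1
  simp only [id_eq]
  ring

lemma hasDerivAt_dphi1 (hp : 5 < p) (hω : 0 < ω) (x : ℝ) :
    HasDerivAt (dphi1 p ω) (dphi2 p ω x) x := by
  have h1 := (hasDerivAt_phid hp hω x).div_const ((p - 1) * ω)
  have h2 := ((hasDerivAt_phid hp hω x).add
    ((hasDerivAt_id x).mul (hasDerivAt_phi2 hp hω x))).div_const (2 * ω)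
  have h := h1.add h2
  have hfun : dphi1 p ω = fun x =>
      phid p ω x / ((p - 1) * ω) + (phid p ω x + x * phi2 p ω x) / (2 * ω) := rfl
  rw [hfun]
  refine h.congr_deriv ?_
  symm
  unfold dphi2
  simp only [id_eq]
  ring

lemma hasDerivAt_xphi (hp : 5 < p) (hω : 0 < ω) (x : ℝ) :
    HasDerivAt (fun y => y * phi p ω y) (phi p ω x + x * phid p ω x) x := by
  have h := (hasDerivAt_id x).mul (hasDerivAt_phi hp hω x)
  refine h.congr_deriv ?_
  symm
  simp only [id_eq]
  ring

lemma hasDerivAt_xphi' (hp : 5 < p) (hω : 0 < ω) (x : ℝ) :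
    HasDerivAt (fun y => phi p ω y + y * phid p ω y)
      (2 * phid p ω x + x * phi2 p ω x) x := by
  have h := (hasDerivAt_phi hp hω x).add ((hasDerivAt_id x).mul (hasDerivAt_phid hp hω x))
  refine h.congr_deriv ?_
  symm
  simp only [id_eq]
  ring

lemma vec_hasDerivAt {u v : ℝ → ℝ} {u' v' : ℝ} {x : ℝ}
    (hu : HasDerivAt u u' x) (hv : HasDerivAt v v' x) :
    HasDerivAt (fun y => (![(u y : ℂ), (v y : ℂ)] : Fin 2 → ℂ)) ![(u' : ℂ), (v' : ℂ)] x := by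
  rw [hasDerivAt_pi]
  intro i
  fin_cases i
  · simpa using hu.ofReal_comp
  · simpa using hv.ofReal_comp

lemma deriv2_vec {ξ : ℝ → Fin 2 → ℂ} {u v u' v' : ℝ → ℝ} {u₂ v₂ : ℝ} {x : ℝ}
    (hξ : ξ = fun y => (![(u y : ℂ), (v y : ℂ)] : Fin 2 → ℂ))
    (hu : ∀ y, HasDerivAt u (u' y) y) (hv : ∀ y, HasDerivAt v (v' y) y)
    (hu' : HasDerivAt u' u₂ x) (hv' : HasDerivAt v' v₂ x) :
    deriv (deriv ξ) x = ![(u₂ : ℂ), (v₂ : ℂ)] := by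
  have h1 : deriv ξ = fun y => (![(u' y : ℂ), (v' y : ℂ)] : Fin 2 → ℂ) := by
    funext y
    rw [hξ]
    exact (vec_hasDerivAt (hu y) (hv y)).deriv
  rw [h1]
  exact (vec_hasDerivAt hu' hv').deriv

lemma Hop_eq (p ω : ℝ) (ξ : ℝ → Fin 2 → ℂ) (x : ℝ) (a b f₂ g₂ : ℝ)
    (hx : ξ x = ![(a : ℂ), (b : ℂ)]) (hd : deriv (deriv ξ) x = ![(f₂ : ℂ), (g₂ : ℂ)]) :
    Hop p ω ξ x =
      ![((-f₂ + ω * a - 1 / 2 * phi p ω x ^ (p - 1) * ((p + 1) * a + (p - 1) * b) : ℝ) : ℂ),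
        ((g₂ - ω * b + 1 / 2 * phi p ω x ^ (p - 1) * ((p - 1) * a + (p + 1) * b) : ℝ) : ℂ)] := by
  unfold Hop σ3 σ2
  rw [hx, hd]
  funext i
  fin_cases i <;>
  · simp [Matrix.mulVec, dotProduct, Fin.sum_univ_two, Complex.I_mul_I]
    push_cast
    ring

end GK

open GK

/-- Generalized kernel identities: `H_ω ∂_ωΦ_ω = -σ₃Φ_ω`, `H_ω (xσ₃Φ_ω) = -2Φ_ω'`, and
`H_ω ∘ H_ω` annihilates `σ₃Φ_ω`, `Φ_ω'`, `∂_ωΦ_ω` and `xσ₃Φ_ω`. -/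
theorem generalized_kernel (p : ℝ) (hp : 5 < p) (ω : ℝ) (hω : 0 < ω) (x : ℝ) :
    Hop p ω (fun y => deriv (fun w => PhiVec p w y) ω) x = -(σ3.mulVec (PhiVec p ω x)) ∧
    Hop p ω (fun y => (y : ℂ) • σ3.mulVec (PhiVec p ω y)) x
      = -((2 : ℂ) • deriv (PhiVec p ω) x) ∧
    Hop p ω (fun y => Hop p ω (fun z => σ3.mulVec (PhiVec p ω z)) y) x = 0 ∧
    Hop p ω (fun y => Hop p ω (deriv (PhiVec p ω)) y) x = 0 ∧
    Hop p ω (fun y => Hop p ω (fun z => deriv (fun w => PhiVec p w z) ω) y) x = 0 ∧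
    Hop p ω (fun y => Hop p ω (fun z => (z : ℂ) • σ3.mulVec (PhiVec p ω z)) y) x = 0 := by
  have hp1 : p - 1 ≠ 0 := by nlinarith
  have hωne : ω ≠ 0 := hω.ne'
  have hphi := fun y => hasDerivAt_phi hp hω y
  have hphid := fun y => hasDerivAt_phid hp hω y
  have hphi2 := fun y => hasDerivAt_phi2 hp hω y
  have hdphi := fun y => hasDerivAt_dphi hp hω y
  have hdphi1 := fun y => hasDerivAt_dphi1 hp hω y
  have hΦfun : PhiVec p ω
      = fun y => (![((phi p ω y : ℝ) : ℂ), ((phi p ω y : ℝ) : ℂ)] : Fin 2 → ℂ) := rfl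
  have hderivΦ : deriv (PhiVec p ω)
      = fun y => (![((phid p ω y : ℝ) : ℂ), ((phid p ω y : ℝ) : ℂ)] : Fin 2 → ℂ) := by
    funext y
    rw [hΦfun]
    exact (vec_hasDerivAt (hphi y) (hphi y)).deriv
  have hξA : (fun y => deriv (fun w => PhiVec p w y) ω)
      = fun y => (![((dphi p ω y : ℝ) : ℂ), ((dphi p ω y : ℝ) : ℂ)] : Fin 2 → ℂ) := by
    funext y
    have hw : (fun w => PhiVec p w y)
        = fun w => (![((phi p w y : ℝ) : ℂ), ((phi p w y : ℝ) : ℂ)] : Fin 2 → ℂ) := rfl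
    rw [hw]
    exact (vec_hasDerivAt (hasDerivAt_phiomega hp hω y) (hasDerivAt_phiomega hp hω y)).deriv
  have hξB : (fun (y : ℝ) => (y : ℂ) • σ3.mulVec (PhiVec p ω y))
      = fun y => (![((y * phi p ω y : ℝ) : ℂ), ((-(y * phi p ω y) : ℝ) : ℂ)] : Fin 2 → ℂ) := by
    funext y i
    fin_cases i <;> simp [σ3, PhiVec, Matrix.mulVec, dotProduct, Fin.sum_univ_two] <;>
      push_cast <;> ring
  have hξC : (fun z => σ3.mulVec (PhiVec p ω z))
      = fun z => (![((phi p ω z : ℝ) : ℂ), ((-phi p ω z : ℝ) : ℂ)] : Fin 2 → ℂ) := by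
    funext z i
    fin_cases i <;> simp [σ3, PhiVec, Matrix.mulVec, dotProduct, Fin.sum_univ_two] <;>
      push_cast <;> ring
  -- key pointwise identities
  have keyA : ∀ y, Hop p ω (fun z => deriv (fun w => PhiVec p w z) ω) y
      = ![((-phi p ω y : ℝ) : ℂ), ((phi p ω y : ℝ) : ℂ)] := by
    intro y
    rw [hξA, Hop_eq p ω _ y (dphi p ω y) (dphi p ω y) (dphi2 p ω y) (dphi2 p ω y) rfl
      (deriv2_vec rfl hdphi hdphi (hdphi1 y) (hdphi1 y))]
    have e1 : -dphi2 p ω y + ω * dphi p ω y - 1 / 2 * phi p ω y ^ (p - 1) *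
        ((p + 1) * dphi p ω y + (p - 1) * dphi p ω y) = -phi p ω y := by
      unfold dphi2 dphi phi2 phi3
      field_simp
      ring
    have e2 : dphi2 p ω y - ω * dphi p ω y + 1 / 2 * phi p ω y ^ (p - 1) *
        ((p - 1) * dphi p ω y + (p + 1) * dphi p ω y) = phi p ω y := by
      unfold dphi2 dphi phi2 phi3
      field_simp
      ring
    rw [e1, e2]
  have keyB : ∀ y, Hop p ω (fun z => (z : ℂ) • σ3.mulVec (PhiVec p ω z)) y
      = ![((-(2 * phid p ω y) : ℝ) : ℂ), ((-(2 * phid p ω y) : ℝ) : ℂ)] := by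
    intro y
    rw [hξB, Hop_eq p ω _ y (y * phi p ω y) (-(y * phi p ω y))
      (2 * phid p ω y + y * phi2 p ω y) (-(2 * phid p ω y + y * phi2 p ω y)) rfl
      (deriv2_vec (v := fun y => -(y * phi p ω y)) rfl (fun z => hasDerivAt_xphi hp hω z)
        (fun z => (hasDerivAt_xphi hp hω z).neg)
        (hasDerivAt_xphi' hp hω y) (hasDerivAt_xphi' hp hω y).neg)]
    have e1 : -(2 * phid p ω y + y * phi2 p ω y) + ω * (y * phi p ω y) -
        1 / 2 * phi p ω y ^ (p - 1) *
        ((p + 1) * (y * phi p ω y) + (p - 1) * -(y * phi p ω y)) = -(2 * phid p ω y) := by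
      unfold phi2
      ring
    have e2 : -(2 * phid p ω y + y * phi2 p ω y) - ω * -(y * phi p ω y) +
        1 / 2 * phi p ω y ^ (p - 1) *
        ((p - 1) * (y * phi p ω y) + (p + 1) * -(y * phi p ω y)) = -(2 * phid p ω y) := by
      unfold phi2
      ring
    rw [e1, e2]
  have keyC : ∀ y, Hop p ω (fun z => σ3.mulVec (PhiVec p ω z)) y
      = ![((0 : ℝ) : ℂ), ((0 : ℝ) : ℂ)] := by
    intro y
    rw [hξC, Hop_eq p ω _ y (phi p ω y) (-phi p ω y) (phi2 p ω y) (-phi2 p ω y) rfl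
      (deriv2_vec (v := fun z => -phi p ω z) rfl hphi (fun z => (hphi z).neg) (hphid y) (hphid y).neg)]
    have e1 : -phi2 p ω y + ω * phi p ω y - 1 / 2 * phi p ω y ^ (p - 1) *
        ((p + 1) * phi p ω y + (p - 1) * -phi p ω y) = (0 : ℝ) := by
      unfold phi2
      ring
    have e2 : -phi2 p ω y - ω * -phi p ω y + 1 / 2 * phi p ω y ^ (p - 1) *
        ((p - 1) * phi p ω y + (p + 1) * -phi p ω y) = (0 : ℝ) := by
      unfold phi2
      ring
    rw [e1, e2]
  have keyD : ∀ y, Hop p ω (deriv (PhiVec p ω)) y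
      = ![((0 : ℝ) : ℂ), ((0 : ℝ) : ℂ)] := by
    intro y
    rw [hderivΦ, Hop_eq p ω _ y (phid p ω y) (phid p ω y) (phi3 p ω y) (phi3 p ω y) rfl
      (deriv2_vec rfl hphid hphid (hphi2 y) (hphi2 y))]
    have e1 : -phi3 p ω y + ω * phid p ω y - 1 / 2 * phi p ω y ^ (p - 1) *
        ((p + 1) * phid p ω y + (p - 1) * phid p ω y) = (0 : ℝ) := by
      unfold phi3
      ring
    have e2 : phi3 p ω y - ω * phid p ω y + 1 / 2 * phi p ω y ^ (p - 1) *
        ((p - 1) * phid p ω y + (p + 1) * phid p ω y) = (0 : ℝ) := by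
      unfold phi3
      ring
    rw [e1, e2]
  have hzero : ∀ (g : ℝ → Fin 2 → ℂ),
      g = (fun _ => (![((0 : ℝ) : ℂ), ((0 : ℝ) : ℂ)] : Fin 2 → ℂ)) → Hop p ω g x = 0 := by
    intro g hg
    rw [hg, Hop_eq p ω _ x 0 0 0 0 rfl
      (deriv2_vec rfl (fun y => hasDerivAt_const y (0 : ℝ)) (fun y => hasDerivAt_const y (0 : ℝ))
        (hasDerivAt_const x (0 : ℝ)) (hasDerivAt_const x (0 : ℝ)))]
    funext i
    fin_cases i <;> simp <;> ring
  refine ⟨?_, ?_, ?_, ?_, ?_, ?_⟩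
  · rw [keyA x]
    funext i
    fin_cases i <;> simp [σ3, PhiVec, Matrix.mulVec, dotProduct, Fin.sum_univ_two] <;>
      push_cast <;> ring
  · rw [keyB x, hderivΦ]
    funext i
    fin_cases i <;> simp <;> push_cast <;> ring
  · exact hzero _ (funext keyC)
  · exact hzero _ (funext keyD)
  · -- Hop of (fun y => Hop ... ) where inner equals ![-(phi), phi]
    have hfun : (fun y => Hop p ω (fun z => deriv (fun w => PhiVec p w z) ω) y)
        = fun y => (![((-phi p ω y : ℝ) : ℂ), ((phi p ω y : ℝ) : ℂ)] : Fin 2 → ℂ) :=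
      funext keyA
    rw [hfun, Hop_eq p ω _ x (-phi p ω x) (phi p ω x) (-phi2 p ω x) (phi2 p ω x) rfl
      (deriv2_vec (u := fun z => -phi p ω z) rfl (fun z => (hphi z).neg) hphi (hphid x).neg (hphid x))]
    have e1 : -(-phi2 p ω x) + ω * -phi p ω x - 1 / 2 * phi p ω x ^ (p - 1) *
        ((p + 1) * -phi p ω x + (p - 1) * phi p ω x) = (0 : ℝ) := by
      unfold phi2
      ring
    have e2 : phi2 p ω x - ω * phi p ω x + 1 / 2 * phi p ω x ^ (p - 1) *
        ((p - 1) * -phi p ω x + (p + 1) * phi p ω x) = (0 : ℝ) := by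
      unfold phi2
      ring
    rw [e1, e2]
    funext i
    fin_cases i <;> simp
  · have hfun : (fun y => Hop p ω (fun z => (z : ℂ) • σ3.mulVec (PhiVec p ω z)) y)
        = fun y => (![((-(2 * phid p ω y) : ℝ) : ℂ), ((-(2 * phid p ω y) : ℝ) : ℂ)]
          : Fin 2 → ℂ) :=
      funext keyB
    rw [hfun, Hop_eq p ω _ x (-(2 * phid p ω x)) (-(2 * phid p ω x))
      (-(2 * phi3 p ω x)) (-(2 * phi3 p ω x)) rfl
      (deriv2_vec (u := fun z => -(2 * phid p ω z)) (v := fun z => -(2 * phid p ω z)) rfl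
          (fun z => ((hphid z).const_mul 2).neg)
        (fun z => ((hphid z).const_mul 2).neg)
        ((hphi2 x).const_mul 2).neg ((hphi2 x).const_mul 2).neg)]
    have e1 : -(-(2 * phi3 p ω x)) + ω * -(2 * phid p ω x) - 1 / 2 * phi p ω x ^ (p - 1) *
        ((p + 1) * -(2 * phid p ω x) + (p - 1) * -(2 * phid p ω x)) = (0 : ℝ) := by
      unfold phi3
      ring
    have e2 : -(2 * phi3 p ω x) - ω * -(2 * phid p ω x) + 1 / 2 * phi p ω x ^ (p - 1) *
        ((p - 1) * -(2 * phid p ω x) + (p + 1) * -(2 * phid p ω x)) = (0 : ℝ) := by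
      unfold phi3
      ring
    rw [e1, e2]
    funext i
    fin_cases i <;> simp
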